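/- arXiv:2306.10313 — 5 statements merged into one kernel-verified Lean document; each statement's English description precedes it below -/
import Mathlib

section
/- Let A ∈ ℝ^{n×n} be symmetric positive semidefinite with A·1 = 0. Let c ∈ [0,1), let ε ∈ [−c, 1−c]^n, and set s₀ = c·1 + ε. Let 1 ≤ k ≤ n and γ₁, γ₂, γ₃ ∈ (0,1). Assume that for every subset X ⊆ {1,…,n} with |X| = k: (1) (s_X − s₀)^T A s₀ ≥ −γ₁ · s₀^T A s₀; (2) (ε|_X)^T A (ε|_X) ≤ γ₂ · s₀^T A s₀; and (3) |(ε|_X)^T A (1|_X)| ≤ γ₃ · s₀^T A s₀. Let β ∈ (0,1] and suppose ALG ⊆ {1,…,n} with |ALG| = k satisfies (1|_{ALG})^T A (1|_{ALG}) ≥ β · (1|_X)^T A (1|_X) for every X with |X| = k. Then for every X with |X| = k it holds that (s_{ALG})^T A (s_{ALG}) ≥ (1/4) · min{ β, (1 − 2γ₁ − 2(1−c)γ₃) / (1 + 2(1−c)γ₃ + γ₂) } · (s_X)^T A (s_X). -/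
open Matrix BigOperators

lemma my_symm {n : ℕ} {A : Matrix (Fin n) (Fin n) ℝ} (hA : A.PosSemidef)
    (u v : Fin n → ℝ) : u ⬝ᵥ A.mulVec v = v ⬝ᵥ A.mulVec u := by
  have h : Aᵀ = A := by
    have := hA.1
    simpa [Matrix.IsHermitian, Matrix.conjTranspose_eq_transpose_of_trivial] using this
  rw [Matrix.dotProduct_mulVec, ← Matrix.mulVec_transpose, h, dotProduct_comm]

lemma my_expand_add {n : ℕ} {A : Matrix (Fin n) (Fin n) ℝ} (hA : A.PosSemidef)
    (u v : Fin n → ℝ) :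
    (u + v) ⬝ᵥ A.mulVec (u + v)
      = u ⬝ᵥ A.mulVec u + 2 * (v ⬝ᵥ A.mulVec u) + v ⬝ᵥ A.mulVec v := by
  simp [Matrix.mulVec_add, dotProduct_add, add_dotProduct, my_symm hA u v]
  ring

lemma my_expand_sub {n : ℕ} {A : Matrix (Fin n) (Fin n) ℝ} (hA : A.PosSemidef)
    (u v : Fin n → ℝ) :
    (u - v) ⬝ᵥ A.mulVec (u - v)
      = u ⬝ᵥ A.mulVec u - 2 * (v ⬝ᵥ A.mulVec u) + v ⬝ᵥ A.mulVec v := by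
  simp [Matrix.mulVec_sub, dotProduct_sub, sub_dotProduct, my_symm hA u v]
  ring

lemma my_expand_smul_sub {n : ℕ} {A : Matrix (Fin n) (Fin n) ℝ} (hA : A.PosSemidef)
    (a : ℝ) (u v : Fin n → ℝ) :
    (a • u - v) ⬝ᵥ A.mulVec (a • u - v)
      = a ^ 2 * (u ⬝ᵥ A.mulVec u) - 2 * a * (v ⬝ᵥ A.mulVec u) + v ⬝ᵥ A.mulVec v := by
  rw [my_expand_sub hA]
  simp [Matrix.mulVec_smul, dotProduct_smul, smul_dotProduct, smul_eq_mul]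
  ring

lemma my_final (t a β oX N D m QA QX : ℝ)
    (ht0 : 0 ≤ t) (hoX0 : 0 ≤ oX) (hD0 : 0 < D) (hβ0 : 0 < β)
    (hm : m = min β (N / D))
    (hLB : N * t + a ^ 2 * β * oX ≤ QA) (hQA0 : 0 ≤ QA) (hQX0 : 0 ≤ QX)
    (hUB : QX ≤ 2 * D * t + 2 * a ^ 2 * oX) :
    QA ≥ 1 / 4 * m * QX := by
  rcases le_or_gt m 0 with hm0 | hm0
  · nlinarith
  · have hmβ : m ≤ β := hm ▸ min_le_left _ _
    have hmND : m * D ≤ N := by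
      calc m * D ≤ (N / D) * D :=
            mul_le_mul_of_nonneg_right (hm ▸ min_le_right β (N / D)) hD0.le
        _ = N := div_mul_cancel₀ N hD0.ne'
    have hN0 : 0 < N := lt_of_lt_of_le (mul_pos hm0 hD0) hmND
    have k1 : m * D * t ≤ N * t := mul_le_mul_of_nonneg_right hmND ht0
    have k2 : a ^ 2 * (m * oX) ≤ a ^ 2 * (β * oX) :=
      mul_le_mul_of_nonneg_left (mul_le_mul_of_nonneg_right hmβ hoX0) (sq_nonneg a)
    have key : 1 / 4 * m * (2 * D * t + 2 * a ^ 2 * oX) ≤ N * t + a ^ 2 * β * oX := by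
      nlinarith [mul_nonneg hN0.le ht0,
        mul_nonneg (sq_nonneg a) (mul_nonneg hβ0.le hoX0)]
    nlinarith

theorem stmt3 (n k : ℕ) (A : Matrix (Fin n) (Fin n) ℝ)
    (hA : A.PosSemidef) (hA1 : A.mulVec (fun _ => (1 : ℝ)) = 0)
    (c : ℝ) (hc0 : 0 ≤ c) (hc1 : c < 1)
    (ε : Fin n → ℝ) (hε : ∀ i, -c ≤ ε i ∧ ε i ≤ 1 - c)
    (hk1 : 1 ≤ k) (hkn : k ≤ n)
    (γ₁ γ₂ γ₃ : ℝ)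
    (hγ₁ : γ₁ ∈ Set.Ioo (0 : ℝ) 1) (hγ₂ : γ₂ ∈ Set.Ioo (0 : ℝ) 1)
    (hγ₃ : γ₃ ∈ Set.Ioo (0 : ℝ) 1)
    (s₀ : Fin n → ℝ) (hs₀ : s₀ = fun i => c + ε i)
    (sX : Finset (Fin n) → Fin n → ℝ)
    (hsX : ∀ X i, sX X i = if i ∈ X then 1 else s₀ i)
    (restr : (Fin n → ℝ) → Finset (Fin n) → Fin n → ℝ)
    (hrestr : ∀ v X i, restr v X i = if i ∈ X then v i else 0)
    (h1 : ∀ X : Finset (Fin n), X.card = k →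
      (sX X - s₀) ⬝ᵥ A.mulVec s₀ ≥ -γ₁ * (s₀ ⬝ᵥ A.mulVec s₀))
    (h2 : ∀ X : Finset (Fin n), X.card = k →
      restr ε X ⬝ᵥ A.mulVec (restr ε X) ≤ γ₂ * (s₀ ⬝ᵥ A.mulVec s₀))
    (h3 : ∀ X : Finset (Fin n), X.card = k →
      |restr ε X ⬝ᵥ A.mulVec (restr (fun _ => 1) X)| ≤ γ₃ * (s₀ ⬝ᵥ A.mulVec s₀))
    (β : ℝ) (hβ0 : 0 < β) (hβ1 : β ≤ 1)
    (ALG : Finset (Fin n)) (hALG : ALG.card = k)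
    (hALGopt : ∀ X : Finset (Fin n), X.card = k →
      restr (fun _ => 1) ALG ⬝ᵥ A.mulVec (restr (fun _ => 1) ALG) ≥
        β * (restr (fun _ => 1) X ⬝ᵥ A.mulVec (restr (fun _ => 1) X))) :
    ∀ X : Finset (Fin n), X.card = k →
      sX ALG ⬝ᵥ A.mulVec (sX ALG) ≥
        (1 / 4) * min β ((1 - 2 * γ₁ - 2 * (1 - c) * γ₃) / (1 + 2 * (1 - c) * γ₃ + γ₂)) *
          (sX X ⬝ᵥ A.mulVec (sX X)) := by
  intro X hX
  have hpsd : ∀ v, 0 ≤ v ⬝ᵥ A.mulVec v := fun v => by simpa using hA.dotProduct_mulVec_nonneg v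
  set t := s₀ ⬝ᵥ A.mulVec s₀ with ht
  have ht0 : 0 ≤ t := hpsd s₀
  set a := 1 - c with ha
  have ha0 : 0 < a := by simp [ha]; linarith
  -- decomposition
  have hdec : ∀ Y : Finset (Fin n),
      sX Y = s₀ + (a • restr (fun _ => 1) Y - restr ε Y) := by
    intro Y; funext i
    simp only [hsX, hrestr, hs₀, Pi.add_apply, Pi.sub_apply, Pi.smul_apply, smul_eq_mul]
    split_ifs <;> ring
  -- expansion identity for quadratic form of sX Y
  have hQ : ∀ Y : Finset (Fin n),
      sX Y ⬝ᵥ A.mulVec (sX Y)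
        = t + 2 * ((sX Y - s₀) ⬝ᵥ A.mulVec s₀)
          + (a ^ 2 * (restr (fun _ => 1) Y ⬝ᵥ A.mulVec (restr (fun _ => 1) Y))
             - 2 * a * (restr ε Y ⬝ᵥ A.mulVec (restr (fun _ => 1) Y))
             + restr ε Y ⬝ᵥ A.mulVec (restr ε Y)) := by
    intro Y
    have hd : sX Y - s₀ = a • restr (fun _ => 1) Y - restr ε Y := by
      rw [hdec Y]; abel
    rw [hd, hdec Y, my_expand_add hA, my_expand_smul_sub hA, ht]
  -- abbreviations
  set oX := restr (fun _ => 1) X ⬝ᵥ A.mulVec (restr (fun _ => 1) X) with hoX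
  set oA := restr (fun _ => 1) ALG ⬝ᵥ A.mulVec (restr (fun _ => 1) ALG) with hoA
  set mX := restr ε X ⬝ᵥ A.mulVec (restr (fun _ => 1) X) with hmX
  set mA := restr ε ALG ⬝ᵥ A.mulVec (restr (fun _ => 1) ALG) with hmA
  set eX := restr ε X ⬝ᵥ A.mulVec (restr ε X) with heX
  set eA := restr ε ALG ⬝ᵥ A.mulVec (restr ε ALG) with heA
  have hoX0 : 0 ≤ oX := hpsd _
  have heA0 : 0 ≤ eA := hpsd _
  set N := 1 - 2 * γ₁ - 2 * a * γ₃ with hN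
  set D := 1 + 2 * a * γ₃ + γ₂ with hD
  have hD0 : 0 < D := by
    have := hγ₂.1; have := hγ₃.1; nlinarith
  set m := min β (N / D) with hm
  -- lower bound for ALG
  have hmAle : mA ≤ γ₃ * t := le_trans (le_abs_self _) (h3 ALG hALG)
  have hmXge : -(γ₃ * t) ≤ mX := by
    have := h3 X hX
    have := neg_abs_le mX
    linarith [abs_le.mp (h3 X hX) |>.1]
  have hLB : N * t + a ^ 2 * β * oX ≤ sX ALG ⬝ᵥ A.mulVec (sX ALG) := by
    rw [hQ ALG]
    have h1A := h1 ALG hALG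
    have hβopt := hALGopt X hX
    nlinarith [sq_nonneg a]
  -- upper bound for X
  have hUB : sX X ⬝ᵥ A.mulVec (sX X) ≤ 2 * D * t + 2 * a ^ 2 * oX := by
    have hcs : 2 * ((sX X - s₀) ⬝ᵥ A.mulVec s₀) ≤ t + ((sX X - s₀) ⬝ᵥ A.mulVec (sX X - s₀)) := by
      have h0 := hpsd (s₀ - (sX X - s₀))
      rw [my_expand_sub hA] at h0
      linarith
    have hdexp : (sX X - s₀) ⬝ᵥ A.mulVec (sX X - s₀)
        = a ^ 2 * oX - 2 * a * mX + eX := by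
      have hd : sX X - s₀ = a • restr (fun _ => 1) X - restr ε X := by
        rw [hdec X]; abel
      rw [hd, my_expand_smul_sub hA]
    have h2X := h2 X hX
    rw [hQ X]
    nlinarith [hmXge, ha0.le]
  exact my_final t a β oX N D m _ _ ht0 hoX0 hD0 hβ0 hm hLB (hpsd (sX ALG)) (hpsd (sX X)) hUB
end

section
/- Suppose A ∈ ℝ^{n×n} is a symmetric positive semidefinite matrix with 1^T A = 0^T, and let x ∈ {−1,1}^n. Set M = (1/4) x^T A x and S = {i ∈ {1,…,n} : x_i = 1}, and assume S is nonempty. Then there exists i ∈ S such that M − (1/4)(x − 2e_i)^T A (x − 2e_i) ≤ 2M/|S|; that is, changing x_i from 1 to −1 decreases the value (1/4) x^T A x by at most 2M/|S|. -/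
open Matrix BigOperators

theorem stmt4 (n : ℕ) (A : Matrix (Fin n) (Fin n) ℝ)
    (hA : A.PosSemidef) (hA1 : (fun _ => (1 : ℝ)) ᵥ* A = 0)
    (x : Fin n → ℝ) (hx : ∀ i, x i = 1 ∨ x i = -1)
    (M : ℝ) (hM : M = (1 / 4) * (x ⬝ᵥ A.mulVec x))
    (S : Finset (Fin n)) (hS : S = Finset.univ.filter (fun i => x i = 1))
    (hSne : S.Nonempty) :
    ∃ i ∈ S,
      M - (1 / 4) * ((x - 2 • Pi.single i 1) ⬝ᵥ A.mulVec (x - 2 • Pi.single i 1)) ≤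
        2 * M / (S.card : ℝ) := by
  have hsym : ∀ i j, A i j = A j i := by
    intro i j
    have := congrFun (congrFun hA.1 i) j
    simpa [Matrix.conjTranspose_apply] using this.symm
  -- key expansion
  have key : ∀ i : Fin n,
      (x - 2 • Pi.single i 1) ⬝ᵥ A.mulVec (x - 2 • Pi.single i 1)
        = x ⬝ᵥ A.mulVec x - 4 * (A.mulVec x) i + 4 * A i i := by
    intro i
    have h0 : (2 • Pi.single i 1 : Fin n → ℝ) = Pi.single i 2 := by
      ext j; by_cases h : j = i <;> simp [h, Pi.single_apply]
    have h1 : x ⬝ᵥ A.mulVec (Pi.single i 2) = 2 * (A.mulVec x) i := by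
      rw [Matrix.dotProduct_mulVec, dotProduct_single]
      simp only [Matrix.vecMul, Matrix.mulVec, dotProduct]
      rw [Finset.mul_sum, Finset.sum_mul]
      exact Finset.sum_congr rfl fun j _ => by rw [hsym i j]; ring
    have h2 : Pi.single i (2:ℝ) ⬝ᵥ A.mulVec (Pi.single i 2) = 4 * A i i := by
      rw [single_dotProduct, Matrix.mulVec_single]
      simp; ring
    rw [h0]
    simp only [Matrix.mulVec_sub, dotProduct_sub, sub_dotProduct,
      single_dotProduct, h1, h2]
    ring
  have hdiag : ∀ i, 0 ≤ A i i := by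
    intro i
    have h := hA.dotProduct_mulVec_nonneg (Pi.single i 1)
    have h2 : Pi.single i (1:ℝ) ⬝ᵥ A.mulVec (Pi.single i 1) = A i i := by
      rw [single_dotProduct, Matrix.mulVec_single]
      simp
    simpa [h2] using h
  -- the per-i decrease
  have hdecr : ∀ i : Fin n,
      M - (1 / 4) * ((x - 2 • Pi.single i 1) ⬝ᵥ A.mulVec (x - 2 • Pi.single i 1))
        = (A.mulVec x) i - A i i := by
    intro i
    rw [key i, hM]; ring
  -- sum over S of mulVec values equals 2 M
  have hsum : ∑ i ∈ S, (A.mulVec x) i = 2 * M := by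
    have hone : (fun _ => (1:ℝ)) ⬝ᵥ A.mulVec x = 0 := by
      rw [Matrix.dotProduct_mulVec, hA1, zero_dotProduct]
    have hxAx : x ⬝ᵥ A.mulVec x = 4 * M := by rw [hM]; ring
    have : ∑ i ∈ S, (A.mulVec x) i
        = (1/2) * ((fun _ => (1:ℝ)) ⬝ᵥ A.mulVec x + x ⬝ᵥ A.mulVec x) := by
      rw [hS, Finset.sum_filter]
      simp only [dotProduct]
      rw [← Finset.sum_add_distrib, Finset.mul_sum]
      refine Finset.sum_congr rfl fun i _ => ?_
      rcases hx i with h | h <;> simp [h] <;> norm_num <;> ring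
    rw [this, hone, hxAx]; ring
  have hsumle : ∑ i ∈ S, ((A.mulVec x) i - A i i) ≤ ∑ i ∈ S, (2 * M / (S.card : ℝ)) := by
    have hcard : (S.card : ℝ) ≠ 0 := by
      exact_mod_cast Finset.card_ne_zero_of_mem hSne.choose_spec
    have h1 : ∑ i ∈ S, ((A.mulVec x) i - A i i) ≤ 2 * M := by
      rw [Finset.sum_sub_distrib, hsum]
      have : 0 ≤ ∑ i ∈ S, A i i := Finset.sum_nonneg fun i _ => hdiag i
      linarith
    rw [Finset.sum_const, nsmul_eq_mul, mul_div_assoc', mul_comm,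
      mul_div_assoc, div_self hcard, mul_one]
    exact h1
  obtain ⟨i, hiS, hi⟩ := Finset.exists_le_of_sum_le hSne hsumle
  exact ⟨i, hiS, by rw [hdecr i]; exact hi⟩
end

section
/- Suppose A ∈ ℝ^{n×n} is a symmetric positive semidefinite matrix with 1^T A = 0^T, and let x ∈ {−1,1}^n. Let M₀ = (1/4) x^T A x, let S₀ = {i : x_i = 1}, and assume |S₀| ≤ n/2. Let s, t ∈ (0, 1/2] be such that |S₀| = s·n and t·n is an integer. Then there exists a set T ⊆ {1,…,n} with |T| = t·n such that the cut value (1/4) y^T A y, where y_i = 1 for i ∈ T and y_i = −1 for i ∉ T, is at least ((1−t)² − 7(1−t)/n + 12/n²) / ((1−s)² + (1−s)/n) · M₀ if t > s, and at least (t² − t/n) / (s² − s/n) · M₀ if t < s. -/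
open Matrix BigOperators Finset

namespace Stmt5Aux
variable {n : ℕ}

/-- quadratic form of indicator over a set -/
def Q (A : Matrix (Fin n) (Fin n) ℝ) (S : Finset (Fin n)) : ℝ := ∑ i ∈ S, ∑ j ∈ S, A i j

lemma dot_ind (A : Matrix (Fin n) (Fin n) ℝ) (S : Finset (Fin n)) :
    ((fun i => if i ∈ S then (1:ℝ) else 0) ⬝ᵥ A *ᵥ (fun i => if i ∈ S then (1:ℝ) else 0)) = Q A S := by
  simp [Q, dotProduct, Matrix.mulVec, ite_mul, mul_ite, Finset.sum_ite_mem, Finset.univ_inter]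

lemma Q_nonneg {A : Matrix (Fin n) (Fin n) ℝ} (hA : A.PosSemidef) (S : Finset (Fin n)) :
    0 ≤ Q A S := by
  have h := hA.dotProduct_mulVec_nonneg (fun i => if i ∈ S then (1:ℝ) else 0)
  simp only [star_trivial] at h
  rwa [dot_ind] at h

lemma sym {A : Matrix (Fin n) (Fin n) ℝ} (hA : A.PosSemidef) (i j : Fin n) : A j i = A i j := by
  simpa using hA.1.apply i j

lemma diag_nonneg {A : Matrix (Fin n) (Fin n) ℝ} (hA : A.PosSemidef) (i : Fin n) : 0 ≤ A i i := by
  have := Q_nonneg hA {i}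
  simpa [Q] using this

lemma Q_erase {A : Matrix (Fin n) (Fin n) ℝ} (hA : A.PosSemidef) (S : Finset (Fin n))
    {i : Fin n} (hi : i ∈ S) :
    Q A (S.erase i) = Q A S - 2 * ∑ j ∈ S, A i j + A i i := by
  have hrow : ∀ l ∈ S.erase i, ∑ j ∈ S, A l j = A l i + ∑ j ∈ S.erase i, A l j := by
    intro l _
    rw [← Finset.add_sum_erase _ _ hi]
  have h1 : Q A S = ∑ j ∈ S, A i j + ∑ l ∈ S.erase i, ∑ j ∈ S, A l j := by
    rw [Q, ← Finset.add_sum_erase _ _ hi]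
  have h2 : ∑ l ∈ S.erase i, ∑ j ∈ S, A l j
      = ∑ l ∈ S.erase i, A l i + Q A (S.erase i) := by
    rw [Q, ← Finset.sum_add_distrib]
    exact Finset.sum_congr rfl hrow
  have h3 : ∑ l ∈ S.erase i, A l i = ∑ j ∈ S, A i j - A i i := by
    have e1 : ∑ l ∈ S, A l i = A i i + ∑ l ∈ S.erase i, A l i :=
      (Finset.add_sum_erase S (fun l => A l i) hi).symm
    have e2 : ∑ l ∈ S, A l i = ∑ j ∈ S, A i j :=
      Finset.sum_congr rfl (fun l _ => sym hA i l)
    linarith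
  rw [h1, h2, h3]; ring

lemma exists_good_erase {A : Matrix (Fin n) (Fin n) ℝ} (hA : A.PosSemidef)
    (S : Finset (Fin n)) (hS : S.Nonempty) :
    ∃ i ∈ S, ((S.card : ℝ) - 2) / (S.card : ℝ) * Q A S ≤ Q A (S.erase i) := by
  have hk : (0:ℝ) < S.card := by exact_mod_cast Finset.card_pos.mpr hS
  have hsum : ∑ i ∈ S, (((S.card : ℝ) - 2) / (S.card : ℝ) * Q A S) ≤ ∑ i ∈ S, Q A (S.erase i) := by
    have hQe : ∀ i ∈ S, Q A (S.erase i) = Q A S - 2 * ∑ j ∈ S, A i j + A i i :=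
      fun i hi => Q_erase hA S hi
    rw [Finset.sum_congr rfl hQe, Finset.sum_const, nsmul_eq_mul]
    have hcol : ∑ i ∈ S, ∑ j ∈ S, A i j = Q A S := rfl
    have hdiag : 0 ≤ ∑ i ∈ S, A i i := Finset.sum_nonneg fun i _ => diag_nonneg hA i
    have : ∑ i ∈ S, (Q A S - 2 * ∑ j ∈ S, A i j + A i i)
        = (S.card : ℝ) * Q A S - 2 * Q A S + ∑ i ∈ S, A i i := by
      rw [Finset.sum_add_distrib, Finset.sum_sub_distrib, Finset.sum_const, nsmul_eq_mul,
        ← Finset.mul_sum, hcol]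
    rw [this]
    have hdivmul : (S.card : ℝ) * (((S.card : ℝ) - 2) / (S.card : ℝ) * Q A S)
        = ((S.card : ℝ) - 2) * Q A S := by
      field_simp
    rw [hdivmul]; nlinarith
  exact Finset.exists_le_of_sum_le hS hsum

end Stmt5Aux

namespace Stmt5Aux

lemma main_lemma {n : ℕ} {A : Matrix (Fin n) (Fin n) ℝ} (hA : A.PosSemidef) (m d : ℕ) :
    ∀ S : Finset (Fin n), S.card = m + d →
    ∃ T ⊆ S, T.card = m ∧
      ((m:ℝ) * ((m:ℝ) - 1)) / ((S.card:ℝ) * ((S.card:ℝ) - 1)) * Q A S ≤ Q A T := by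
  induction d with
  | zero =>
    intro S hcard
    refine ⟨S, le_refl _, by omega, ?_⟩
    rcases le_or_gt m 1 with hm | hm
    · have hz : (m:ℝ) * ((m:ℝ) - 1) = 0 := by interval_cases m <;> norm_num
      rw [hz, zero_div, zero_mul]
      exact Q_nonneg hA S
    · have hK : (S.card : ℝ) = (m:ℝ) := by rw [hcard]; push_cast; ring
      have hne : (m:ℝ) * ((m:ℝ) - 1) ≠ 0 := by
        have : (2:ℝ) ≤ (m:ℝ) := by exact_mod_cast hm
        nlinarith
      rw [hK, div_self hne, one_mul]
  | succ d ih =>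
    intro S hcard
    rcases le_or_gt m 1 with hm | hm
    · obtain ⟨T, hTS, hTcard⟩ := Finset.exists_subset_card_eq (s := S) (n := m) (by omega)
      refine ⟨T, hTS, hTcard, ?_⟩
      have hz : (m:ℝ) * ((m:ℝ) - 1) = 0 := by interval_cases m <;> norm_num
      rw [hz, zero_div, zero_mul]
      exact Q_nonneg hA T
    · have hSne : S.Nonempty := Finset.card_pos.mp (by omega)
      obtain ⟨i, hiS, hQe⟩ := exists_good_erase hA S hSne
      have hecard : (S.erase i).card = m + d := by
        rw [Finset.card_erase_of_mem hiS]; omega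
      obtain ⟨T, hTe, hTcard, hQT⟩ := ih (S.erase i) hecard
      refine ⟨T, hTe.trans (Finset.erase_subset _ _), hTcard, ?_⟩
      -- real casts
      have hK : (S.card : ℝ) = (m:ℝ) + d + 1 := by rw [hcard]; push_cast; ring
      have hE : ((S.erase i).card : ℝ) = (m:ℝ) + d := by rw [hecard]; push_cast; ring
      have hm2 : (2:ℝ) ≤ (m:ℝ) := by exact_mod_cast hm
      have hd0 : (0:ℝ) ≤ (d:ℝ) := Nat.cast_nonneg d
      have hc' : 0 ≤ ((m:ℝ) * ((m:ℝ) - 1)) / (((m:ℝ) + d) * (((m:ℝ) + d) - 1)) := by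
        apply div_nonneg <;> nlinarith
      rw [hE] at hQT
      rw [hK] at hQe
      rw [hK]
      have step : ((m:ℝ) * ((m:ℝ) - 1)) / (((m:ℝ) + d) * (((m:ℝ) + d) - 1)) *
          (((m:ℝ) + d + 1 - 2) / ((m:ℝ) + d + 1) * Q A S) ≤ Q A T :=
        le_trans (mul_le_mul_of_nonneg_left hQe hc') hQT
      have heq : ((m:ℝ) * ((m:ℝ) - 1)) / (((m:ℝ) + d) * (((m:ℝ) + d) - 1)) *
          (((m:ℝ) + d + 1 - 2) / ((m:ℝ) + d + 1) * Q A S) =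
          ((m:ℝ) * ((m:ℝ) - 1)) / (((m:ℝ) + d + 1) * (((m:ℝ) + d + 1) - 1)) * Q A S := by
        have h1 : (m:ℝ) + d ≠ 0 := by nlinarith
        have h2 : (m:ℝ) + d - 1 ≠ 0 := by nlinarith
        have h3 : (m:ℝ) + d + 1 ≠ 0 := by nlinarith
        have hfac : (m:ℝ) + d + 1 - 2 = (m:ℝ) + d - 1 := by ring
        rw [hfac]
        field_simp
        ring_nf
        field_simp
        ring
      rw [← heq]
      exact step

lemma sum_sub_T {n : ℕ} {A : Matrix (Fin n) (Fin n) ℝ}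
    (hcol : ∀ j, ∑ i, A i j = 0) (T : Finset (Fin n)) :
    ∑ i, ∑ j ∈ T, A i j = 0 := by
  rw [Finset.sum_comm (f := fun i j => A i j)]
  exact Finset.sum_eq_zero fun j _ => hcol j

lemma pm_split {n : ℕ} (T : Finset (Fin n)) (f : Fin n → ℝ) :
    ∑ j, f j * (if j ∈ T then (1:ℝ) else -1) = 2 * ∑ j ∈ T, f j - ∑ j, f j := by
  have h : ∀ j, f j * (if j ∈ T then (1:ℝ) else -1)
      = 2 * (if j ∈ T then f j else 0) - f j := by
    intro j; by_cases hj : j ∈ T <;> simp [hj] <;> ring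
  rw [Finset.sum_congr rfl fun j _ => h j, Finset.sum_sub_distrib, ← Finset.mul_sum]
  congr 2
  simp [Finset.sum_ite_mem]

lemma cut_eq {n : ℕ} {A : Matrix (Fin n) (Fin n) ℝ}
    (hcol : ∀ j, ∑ i, A i j = 0) (hrow : ∀ i, ∑ j, A i j = 0) (T : Finset (Fin n)) :
    (1/4) * ((fun i => if i ∈ T then (1:ℝ) else -1) ⬝ᵥ
      A.mulVec (fun i => if i ∈ T then (1:ℝ) else -1)) = Q A T := by
  have hmv : ∀ i, (A.mulVec fun j => if j ∈ T then (1:ℝ) else -1) i = 2 * ∑ j ∈ T, A i j := by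
    intro i
    show ∑ j, A i j * (if j ∈ T then (1:ℝ) else -1) = _
    rw [pm_split T (A i), hrow i]; ring
  have : (fun i => if i ∈ T then (1:ℝ) else -1) ⬝ᵥ
      A.mulVec (fun i => if i ∈ T then (1:ℝ) else -1)
      = ∑ i, (2 * ∑ j ∈ T, A i j) * (if i ∈ T then (1:ℝ) else -1) := by
    rw [dotProduct]
    exact Finset.sum_congr rfl fun i _ => by rw [hmv i]; ring
  rw [this, pm_split T (fun i => 2 * ∑ j ∈ T, A i j), ← Finset.mul_sum, ← Finset.mul_sum,
    sum_sub_T hcol T, Q]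
  ring

lemma Q_compl {n : ℕ} {A : Matrix (Fin n) (Fin n) ℝ}
    (hcol : ∀ j, ∑ i, A i j = 0) (hrow : ∀ i, ∑ j, A i j = 0) (T : Finset (Fin n)) :
    Q A Tᶜ = Q A T := by
  have hrowT : ∀ i, ∑ j ∈ Tᶜ, A i j = - ∑ j ∈ T, A i j := by
    intro i
    have := Finset.sum_add_sum_compl T (A i)
    rw [hrow i] at this
    linarith
  have h1 : Q A Tᶜ = - ∑ i ∈ Tᶜ, ∑ j ∈ T, A i j := by
    rw [Q, Finset.sum_congr rfl fun i _ => hrowT i, Finset.sum_neg_distrib]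
  have h2 : ∑ i ∈ Tᶜ, ∑ j ∈ T, A i j = - ∑ i ∈ T, ∑ j ∈ T, A i j := by
    have := Finset.sum_add_sum_compl T (fun i => ∑ j ∈ T, A i j)
    rw [sum_sub_T hcol T] at this
    linarith
  rw [h1, h2, Q]; ring

end Stmt5Aux

namespace Stmt5Aux

lemma numcmp_u {a b u : ℝ} (ha : 1/2 ≤ a) (hb : 1/2 ≤ b) (hu0 : 0 < u) (hu : u ≤ 1/4) :
    (a^2 - 7*a*u + 12*u^2)/(b^2 + b*u) ≤ (a^2 - a*u)/(b^2 - b*u) := by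
  have hb0 : (0:ℝ) < b := by linarith
  have hd1 : 0 < b^2 + b*u := by positivity
  have hd2 : 0 < b^2 - b*u := by nlinarith
  rw [div_le_div_iff₀ hd1 hd2]
  nlinarith [mul_nonneg (mul_nonneg hb0.le hu0.le)
      (mul_nonneg hb0.le (by linarith : (0:ℝ) ≤ a - 2*u)),
    mul_nonneg (mul_nonneg hb0.le hu0.le) (sq_nonneg (a - 2*u)),
    mul_nonneg (mul_nonneg hb0.le hu0.le) (mul_nonneg hu0.le hu0.le)]

lemma frac_eq {n : ℕ} (hn : ((n:ℝ)) ≠ 0) {r1 r2 : ℝ} {p q : ℕ}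
    (h1 : (p:ℝ) = r1 * n) (h2 : (q:ℝ) = r2 * n) :
    (r1^2 - r1/n)/(r2^2 - r2/n) = ((p:ℝ)*((p:ℝ)-1))/((q:ℝ)*((q:ℝ)-1)) := by
  have e1 : r1^2 - r1/n = ((p:ℝ)*((p:ℝ)-1))/(n:ℝ)^2 := by rw [h1]; field_simp
  have e2 : r2^2 - r2/n = ((q:ℝ)*((q:ℝ)-1))/(n:ℝ)^2 := by rw [h2]; field_simp
  rw [e1, e2, div_div_div_comm, div_self (pow_ne_zero 2 hn), div_one]

end Stmt5Aux

open Stmt5Aux in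
theorem stmt5 (n : ℕ) (A : Matrix (Fin n) (Fin n) ℝ)
    (hA : A.PosSemidef) (hA1 : (fun _ => (1 : ℝ)) ᵥ* A = 0)
    (x : Fin n → ℝ) (hx : ∀ i, x i = 1 ∨ x i = -1)
    (M₀ : ℝ) (hM₀ : M₀ = (1 / 4) * (x ⬝ᵥ A.mulVec x))
    (S₀ : Finset (Fin n)) (hS₀ : S₀ = Finset.univ.filter (fun i => x i = 1))
    (hhalf : (S₀.card : ℝ) ≤ (n : ℝ) / 2)
    (s t : ℝ) (hs : s ∈ Set.Ioc (0 : ℝ) (1 / 2)) (ht : t ∈ Set.Ioc (0 : ℝ) (1 / 2))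
    (hsn : (S₀.card : ℝ) = s * n)
    (htn : ∃ m : ℕ, (m : ℝ) = t * n) :
    ∃ T : Finset (Fin n), (T.card : ℝ) = t * n ∧
      ((t > s →
        (1 / 4) * ((fun i => if i ∈ T then (1 : ℝ) else -1) ⬝ᵥ
            A.mulVec (fun i => if i ∈ T then (1 : ℝ) else -1)) ≥
          (((1 - t) ^ 2 - 7 * (1 - t) / n + 12 / (n : ℝ) ^ 2) /
              ((1 - s) ^ 2 + (1 - s) / n)) * M₀) ∧
       (t < s →
        (1 / 4) * ((fun i => if i ∈ T then (1 : ℝ) else -1) ⬝ᵥ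
            A.mulVec (fun i => if i ∈ T then (1 : ℝ) else -1)) ≥
          ((t ^ 2 - t / n) / (s ^ 2 - s / n)) * M₀)) := by
  rcases Nat.eq_zero_or_pos n with hn | hn
  · subst hn
    refine ⟨∅, by simp, ?_, ?_⟩ <;> intro _ <;>
      simp [hM₀, dotProduct]
  -- main case n ≥ 1
  have hn0 : (0:ℝ) < n := by exact_mod_cast hn
  have hcol : ∀ j, ∑ i, A i j = 0 := by
    intro j
    have := congrFun hA1 j
    simpa [Matrix.vecMul, dotProduct] using this
  have hrow : ∀ i, ∑ j, A i j = 0 := by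
    intro i
    have : ∑ j, A i j = ∑ j, A j i := Finset.sum_congr rfl fun j _ => sym hA j i
    rw [this]; exact hcol i
  have hxv : x = fun i => if i ∈ S₀ then (1:ℝ) else -1 := by
    funext i
    by_cases hi : i ∈ S₀
    · rw [if_pos hi]
      rw [hS₀, Finset.mem_filter] at hi
      exact hi.2
    · rw [if_neg hi]
      rcases hx i with h | h
      · exact absurd (by rw [hS₀]; simp [h]) hi
      · exact h
  have hM : M₀ = Q A S₀ := by
    rw [hM₀, hxv]; exact cut_eq hcol hrow S₀
  have hM0 : 0 ≤ M₀ := hM ▸ Q_nonneg hA S₀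
  obtain ⟨m, hm⟩ := htn
  have hm1 : 1 ≤ m := by
    by_contra h
    have : m = 0 := by omega
    rw [this, Nat.cast_zero] at hm
    have : 0 < t * n := mul_pos ht.1 hn0
    linarith
  have hk1 : 1 ≤ S₀.card := by
    by_contra h
    have : S₀.card = 0 := by omega
    rw [this, Nat.cast_zero] at hsn
    have : 0 < s * n := mul_pos hs.1 hn0
    linarith
  rcases lt_trichotomy t s with hts | hts | hts
  · -- t < s : shrink S₀
    have hmk : m < S₀.card := by
      have : (m:ℝ) < (S₀.card:ℝ) := by
        rw [hm, hsn]; exact mul_lt_mul_of_pos_right hts hn0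
      exact_mod_cast this
    obtain ⟨T, hTS, hTcard, hQT⟩ :=
      main_lemma hA m (S₀.card - m) S₀ (by omega)
    refine ⟨T, by rw [hTcard, hm], fun h => absurd h (by linarith), fun _ => ?_⟩
    rw [cut_eq hcol hrow T, hM]
    have hk2 : 2 ≤ S₀.card := by omega
    have e : (t^2 - t/n)/(s^2 - s/n)
        = ((m:ℝ)*((m:ℝ)-1))/((S₀.card:ℝ)*((S₀.card:ℝ)-1)) :=
      frac_eq hn0.ne' hm hsn
    rw [e]
    exact hQT
  · -- t = s : take S₀ itself
    refine ⟨S₀, by rw [hsn, hts], fun h => absurd h (by linarith), fun h => absurd h (by linarith)⟩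
  · -- s < t : shrink the complement
    have hkm : S₀.card < m := by
      have : (S₀.card:ℝ) < (m:ℝ) := by
        rw [hm, hsn]; exact mul_lt_mul_of_pos_right hts hn0
      exact_mod_cast this
    have hm2 : 2 ≤ m := by omega
    have h2m : 2 * m ≤ n := by
      have : (m:ℝ) ≤ (n:ℝ)/2 := by
        rw [hm]
        have := ht.2
        nlinarith
      have : (2*m : ℝ) ≤ (n:ℝ) := by push_cast; linarith
      exact_mod_cast this
    have hn4 : 4 ≤ n := by omega
    have hmn : m ≤ n := by omega
    have hcompl : S₀ᶜ.card = n - S₀.card := by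
      rw [Finset.card_compl, Fintype.card_fin]
    obtain ⟨T', hT'S, hT'card, hQT'⟩ :=
      main_lemma hA (n - m) ((n - S₀.card) - (n - m)) S₀ᶜ (by rw [hcompl]; omega)
    refine ⟨T'ᶜ, ?_, fun _ => ?_, fun h => absurd h (by linarith)⟩
    · rw [Finset.card_compl, Fintype.card_fin, hT'card]
      have : n - (n - m) = m := by omega
      rw [this, hm]
    · rw [cut_eq hcol hrow T'ᶜ]
      have hQc : Q A T'ᶜᶜ = Q A T'ᶜ := Q_compl hcol hrow T'ᶜ
      have hQcc : Q A T'ᶜ = Q A T' := by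
        rw [← hQc, compl_compl]
      rw [hQcc]
      -- cast facts
      have hxm : ((n - m : ℕ):ℝ) = (1-t) * n := by
        push_cast [Nat.cast_sub hmn]
        rw [hm]; ring
      have hxk : ((n - S₀.card : ℕ):ℝ) = (1-s) * n := by
        push_cast [Nat.cast_sub (by omega : S₀.card ≤ n)]
        rw [hsn]; ring
      have eY : ((1-t)^2 - (1-t)/n)/((1-s)^2 - (1-s)/n)
          = ((n-m:ℕ):ℝ)*(((n-m:ℕ):ℝ)-1)/(((n-S₀.card:ℕ):ℝ)*(((n-S₀.card:ℕ):ℝ)-1)) :=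
        frac_eq hn0.ne' hxm hxk
      have hMc : Q A S₀ᶜ = M₀ := by rw [Q_compl hcol hrow S₀, hM]
      -- the X ≤ Y comparison
      have hid1 : (1-t)^2 - 7*(1-t)/n + 12/(n:ℝ)^2
          = (1-t)^2 - 7*(1-t)*(1/n) + 12*(1/n)^2 := by ring
      have hid2 : (1-s)^2 + (1-s)/n = (1-s)^2 + (1-s)*(1/n) := by ring
      have hid3 : (1-t)^2 - (1-t)/n = (1-t)^2 - (1-t)*(1/n) := by ring
      have hid4 : (1-s)^2 - (1-s)/n = (1-s)^2 - (1-s)*(1/n) := by ring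
      have hXY : ((1-t)^2 - 7*(1-t)/n + 12/(n:ℝ)^2)/((1-s)^2 + (1-s)/n)
          ≤ ((1-t)^2 - (1-t)/n)/((1-s)^2 - (1-s)/n) := by
        rw [hid1, hid2, hid3, hid4]
        apply numcmp_u (by linarith [ht.2]) (by linarith [hs.2])
          (by positivity)
        rw [div_le_div_iff₀ hn0 (by norm_num)]
        have : (4:ℝ) ≤ (n:ℝ) := by exact_mod_cast hn4
        linarith
      calc (((1-t)^2 - 7*(1-t)/n + 12/(n:ℝ)^2)/((1-s)^2 + (1-s)/n)) * M₀
          ≤ (((1-t)^2 - (1-t)/n)/((1-s)^2 - (1-s)/n)) * M₀ :=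
            mul_le_mul_of_nonneg_right hXY hM0
        _ ≤ Q A T' := by
            rw [eY, ← hMc]
            have hcast : (S₀ᶜ.card : ℝ) = ((n - S₀.card : ℕ):ℝ) := by rw [hcompl]
            rw [show ((n-m:ℕ):ℝ) = ((n-m:ℕ):ℝ) from rfl]
            have := hQT'
            rw [hcompl] at this
            exact this
end

section
/- Let W ∈ ℝ^{n×n} be a symmetric matrix of nonnegative integer weights with zero diagonal, let D be the diagonal matrix with D_{ii} = Σ_j W_{ij}, and let L = D − W be the Laplacian. Let M = Σ_{i,j} W_{ij} and assume M > 0. Let Q be a positive integer with Q ≥ (M² − 1) · max_i D_{ii}. Then for every s ∈ {−1,1}^n, the vector z = (I + (1/Q)L)^{-1} s satisfies s^T L s − 8/M − 2/M³ ≤ z^T L z ≤ s^T L s + 4/M + 5/(2M³). -/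
open Matrix BigOperators

set_option maxHeartbeats 1000000 in
private lemma scalar_key (M d Q' a b : ℝ) (hd : 1 ≤ d) (hMd : 2*d ≤ M) (hM2 : 2 ≤ M)
    (hQ : (M^2 - 1)*d ≤ Q') (ha : 0 < a) (haM : a ≤ 2*M) (hb0 : 0 ≤ b) (hb : b ≤ 2*d*a) :
    2*b/Q' - b^2/(Q'^2*a) ≤ 8/M + 2/M^3 := by
  have hd0 : (0:ℝ) < d := by linarith
  have hE : (0:ℝ) < M^2 - 1 := by nlinarith
  have hE3 : (3:ℝ) ≤ M^2 - 1 := by nlinarith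
  have hQ'pos : (0:ℝ) < Q' := lt_of_lt_of_le (by nlinarith) hQ
  have hQ3d : 3*d ≤ Q' := by nlinarith
  have hM0 : (0:ℝ) < M := by linarith
  have hEne : (M^2 - 1) ≠ 0 := ne_of_gt hE
  have hMne : M ≠ 0 := ne_of_gt hM0
  have hQne : Q' ≠ 0 := ne_of_gt hQ'pos
  have hane : a ≠ 0 := ne_of_gt ha
  have stepA : 2*b/Q' - b^2/(Q'^2*a) ≤ 4*d*a/Q' - 4*d^2*a/Q'^2 := by
    have key : 0 ≤ (2*d*a - b)*(2*a*Q' - 2*d*a - b) := by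
      apply mul_nonneg (by linarith)
      nlinarith
    have id1 : (4*d*a/Q' - 4*d^2*a/Q'^2) - (2*b/Q' - b^2/(Q'^2*a))
        = (2*d*a - b)*(2*a*Q' - 2*d*a - b)/(Q'^2*a) := by
      field_simp
      ring
    nlinarith [div_nonneg key (by positivity : (0:ℝ) ≤ Q'^2*a)]
  have stepB1 : 4*d*a/Q' - 4*d^2*a/Q'^2 ≤ 8*M*d/Q' - 8*M*d^2/Q'^2 := by
    have key : 0 ≤ (2*M - a)*(4*d*(Q' - d)) := by
      apply mul_nonneg (by linarith)
      nlinarith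
    have id1 : (8*M*d/Q' - 8*M*d^2/Q'^2) - (4*d*a/Q' - 4*d^2*a/Q'^2)
        = (2*M - a)*(4*d*(Q' - d))/Q'^2 := by
      field_simp
      ring
    nlinarith [div_nonneg key (by positivity : (0:ℝ) ≤ Q'^2)]
  have stepB2 : 8*M*d/Q' - 8*M*d^2/Q'^2 ≤ 8*M*(M^2-2)/(M^2-1)^2 := by
    have f1 : 0 ≤ Q' - (M^2-1)*d := by linarith
    have f2 : 0 ≤ (M^2-1)*Q' - Q' - (M^2-1)*d := by
      nlinarith [mul_le_mul_of_nonneg_left hQ (by linarith : (0:ℝ) ≤ M^2 - 2)]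
    have key : 0 ≤ 8*M*((Q' - (M^2-1)*d)*((M^2-1)*Q' - Q' - (M^2-1)*d)) :=
      mul_nonneg (by linarith) (mul_nonneg f1 f2)
    have id1 : 8*M*(M^2-2)/(M^2-1)^2 - (8*M*d/Q' - 8*M*d^2/Q'^2)
        = 8*M*((Q' - (M^2-1)*d)*((M^2-1)*Q' - Q' - (M^2-1)*d))/((M^2-1)^2*Q'^2) := by
      field_simp
      ring
    nlinarith [div_nonneg key (by positivity : (0:ℝ) ≤ (M^2-1)^2*Q'^2)]
  have stepC : 8*M*(M^2-2)/(M^2-1)^2 ≤ 8/M + 2/M^3 := by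
    have id1 : (8/M + 2/M^3) - 8*M*(M^2-2)/(M^2-1)^2 = 2*(M^2+1)^2/(M^3*(M^2-1)^2) := by
      field_simp
      ring
    nlinarith [id1, (by positivity : (0:ℝ) ≤ 2*(M^2+1)^2/(M^3*(M^2-1)^2))]
  linarith

set_option maxHeartbeats 2000000 in
theorem stmt9 (n : ℕ) (W : Matrix (Fin n) (Fin n) ℝ)
    (hsymm : W.IsSymm) (hint : ∀ i j, ∃ m : ℕ, W i j = m) (hdiag : ∀ i, W i i = 0)
    (L : Matrix (Fin n) (Fin n) ℝ)
    (hL : L = Matrix.diagonal (fun i => ∑ j, W i j) - W)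
    (M : ℝ) (hM : M = ∑ i, ∑ j, W i j) (hMpos : 0 < M)
    (Q : ℕ) (hQpos : 0 < Q)
    (hQ : ∀ i, (M ^ 2 - 1) * (∑ j, W i j) ≤ (Q : ℝ))
    (s : Fin n → ℝ) (hs : ∀ i, s i = 1 ∨ s i = -1)
    (z : Fin n → ℝ) (hz : z = ((1 + (Q : ℝ)⁻¹ • L)⁻¹).mulVec s) :
    s ⬝ᵥ L.mulVec s - 8 / M - 2 / M ^ 3 ≤ z ⬝ᵥ L.mulVec z ∧
      z ⬝ᵥ L.mulVec z ≤ s ⬝ᵥ L.mulVec s + 4 / M + 5 / (2 * M ^ 3) := by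
  classical
  have hWs : ∀ i j, W j i = W i j := fun i j => congrFun (congrFun hsymm i) j
  have hW0 : ∀ i j, (0:ℝ) ≤ W i j := fun i j => by
    obtain ⟨m, hm⟩ := hint i j; rw [hm]; positivity
  set D : Fin n → ℝ := fun i => ∑ j, W i j with hD
  have hD0 : ∀ i, 0 ≤ D i := fun i => Finset.sum_nonneg fun j _ => hW0 i j
  have hcol : ∀ j, ∑ i, W i j = D j := fun j => Finset.sum_congr rfl fun i _ => hWs j i
  have hdot : ∀ v : Fin n → ℝ, v ⬝ᵥ v = ∑ i, (v i)^2 :=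
    fun v => Finset.sum_congr rfl fun i _ => (sq (v i)).symm
  have hself : ∀ v : Fin n → ℝ, 0 ≤ v ⬝ᵥ v :=
    fun v => Finset.sum_nonneg fun i _ => mul_self_nonneg _
  -- n is nonzero
  have hn : n ≠ 0 := by
    rintro rfl
    rw [hM] at hMpos
    simp at hMpos
  -- max degree d
  obtain ⟨i₀, -, hi₀⟩ := Finset.exists_max_image Finset.univ D
    ⟨⟨0, Nat.pos_of_ne_zero hn⟩, Finset.mem_univ _⟩
  set d := D i₀ with hddef
  have hdmax : ∀ i, D i ≤ d := fun i => hi₀ i (Finset.mem_univ i)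
  have hd_pos : 0 < d := by
    by_contra h
    push_neg at h
    have hall : ∀ i, D i ≤ 0 := fun i => le_trans (hdmax i) h
    have : M ≤ 0 := by
      rw [hM]
      exact Finset.sum_nonpos fun i _ => hall i
    linarith
  have hd1 : 1 ≤ d := by
    choose f hf using hint
    have hdn : d = ((∑ j, f i₀ j : ℕ) : ℝ) := by
      rw [hddef, hD, Nat.cast_sum]
      exact Finset.sum_congr rfl fun j _ => hf i₀ j
    rw [hdn] at hd_pos ⊢
    have : 0 < ∑ j, f i₀ j := by exact_mod_cast hd_pos
    exact_mod_cast this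
  -- M ≥ 2d
  have h2d : 2*d ≤ M := by
    have e1 : M = D i₀ + ∑ i ∈ Finset.univ.erase i₀, D i := by
      rw [hM]
      exact (Finset.add_sum_erase _ D (Finset.mem_univ i₀)).symm
    have e2 : ∑ i ∈ Finset.univ.erase i₀, W i i₀ = D i₀ := by
      rw [Finset.sum_erase_eq_sub (Finset.mem_univ i₀), hcol i₀, hdiag i₀, sub_zero]
    have e3 : ∑ i ∈ Finset.univ.erase i₀, W i i₀ ≤ ∑ i ∈ Finset.univ.erase i₀, D i :=
      Finset.sum_le_sum fun i _ => Finset.single_le_sum (fun j _ => hW0 i j) (Finset.mem_univ i₀)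
    linarith
  have hM2 : 2 ≤ M := by linarith
  have hQR : (0:ℝ) < (Q:ℝ) := by exact_mod_cast hQpos
  have hQne : ((Q:ℝ)) ≠ 0 := ne_of_gt hQR
  have hQd : (M^2 - 1)*d ≤ (Q:ℝ) := hQ i₀
  have hQ3d : 3*d ≤ (Q:ℝ) := by nlinarith
  -- bilinear identity
  have swapW : ∀ g : Fin n → Fin n → ℝ,
      ∑ i, ∑ j, W i j * g i j = ∑ i, ∑ j, W i j * g j i := by
    intro g
    rw [Finset.sum_comm]
    exact Finset.sum_congr rfl fun i _ => Finset.sum_congr rfl fun j _ => by rw [hWs]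
  have bilin : ∀ x y : Fin n → ℝ,
      x ⬝ᵥ L *ᵥ y = (1/2) * ∑ i, ∑ j, W i j * ((x i - x j) * (y i - y j)) := by
    intro x y
    have e1 : x ⬝ᵥ (Matrix.diagonal D) *ᵥ y = ∑ i, ∑ j, W i j * (x i * y i) := by
      simp only [dotProduct, Matrix.mulVec_diagonal]
      exact Finset.sum_congr rfl fun i _ => by
        rw [Finset.sum_mul, Finset.mul_sum]
        exact Finset.sum_congr rfl fun j _ => by ring
    have e2 : x ⬝ᵥ W *ᵥ y = ∑ i, ∑ j, W i j * (x i * y j) := by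
      simp only [dotProduct, Matrix.mulVec, Finset.mul_sum]
      exact Finset.sum_congr rfl fun i _ => Finset.sum_congr rfl fun j _ => by ring
    have expand : x ⬝ᵥ L *ᵥ y
        = (∑ i, ∑ j, W i j * (x i * y i)) - ∑ i, ∑ j, W i j * (x i * y j) := by
      rw [hL, Matrix.sub_mulVec, dotProduct_sub, e1, e2]
    have swap1 := swapW (fun i j => x i * y i)
    have swap2 := swapW (fun i j => x i * y j)
    have split : ∑ i, ∑ j, W i j * ((x i - x j) * (y i - y j))
        = (∑ i, ∑ j, W i j * (x i * y i)) + (∑ i, ∑ j, W i j * (x j * y j))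
          - (∑ i, ∑ j, W i j * (x i * y j)) - (∑ i, ∑ j, W i j * (x j * y i)) := by
      rw [← Finset.sum_add_distrib, ← Finset.sum_sub_distrib, ← Finset.sum_sub_distrib]
      exact Finset.sum_congr rfl fun i _ => by
        rw [← Finset.sum_add_distrib, ← Finset.sum_sub_distrib, ← Finset.sum_sub_distrib]
        exact Finset.sum_congr rfl fun j _ => by ring
    rw [expand, split, ← swap1, ← swap2]
    ring
  have hpsd : ∀ x : Fin n → ℝ, 0 ≤ x ⬝ᵥ L *ᵥ x := by
    intro x
    rw [bilin]
    apply mul_nonneg (by norm_num)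
    exact Finset.sum_nonneg fun i _ => Finset.sum_nonneg fun j _ =>
      mul_nonneg (hW0 i j) (mul_self_nonneg _)
  have hLsymm2 : ∀ x y : Fin n → ℝ, x ⬝ᵥ L *ᵥ y = y ⬝ᵥ L *ᵥ x := by
    intro x y
    rw [bilin, bilin]
    congr 1
    exact Finset.sum_congr rfl fun i _ => Finset.sum_congr rfl fun j _ => by ring
  -- Cauchy-Schwarz for the Laplacian form
  have hCS : ∀ x y : Fin n → ℝ,
      (x ⬝ᵥ L *ᵥ y)^2 ≤ (x ⬝ᵥ L *ᵥ x) * (y ⬝ᵥ L *ᵥ y) := by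
    intro x y
    have key := Finset.sum_mul_sq_le_sq_mul_sq (Finset.univ ×ˢ Finset.univ)
      (fun p => Real.sqrt (W p.1 p.2) * (x p.1 - x p.2))
      (fun p => Real.sqrt (W p.1 p.2) * (y p.1 - y p.2))
    have c1 : ∑ p ∈ Finset.univ ×ˢ Finset.univ,
        (Real.sqrt (W p.1 p.2) * (x p.1 - x p.2)) * (Real.sqrt (W p.1 p.2) * (y p.1 - y p.2))
        = ∑ i, ∑ j, W i j * ((x i - x j) * (y i - y j)) := by
      rw [Finset.sum_product]
      exact Finset.sum_congr rfl fun i _ => Finset.sum_congr rfl fun j _ => by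
        rw [show (Real.sqrt (W i j) * (x i - x j)) * (Real.sqrt (W i j) * (y i - y j))
            = (Real.sqrt (W i j) * Real.sqrt (W i j)) * ((x i - x j) * (y i - y j)) by ring,
          Real.mul_self_sqrt (hW0 i j)]
    have c2 : ∑ p ∈ Finset.univ ×ˢ Finset.univ,
        (Real.sqrt (W p.1 p.2) * (x p.1 - x p.2))^2
        = ∑ i, ∑ j, W i j * ((x i - x j) * (x i - x j)) := by
      rw [Finset.sum_product]
      exact Finset.sum_congr rfl fun i _ => Finset.sum_congr rfl fun j _ => by
        rw [mul_pow, Real.sq_sqrt (hW0 i j)]; ring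
    have c3 : ∑ p ∈ Finset.univ ×ˢ Finset.univ,
        (Real.sqrt (W p.1 p.2) * (y p.1 - y p.2))^2
        = ∑ i, ∑ j, W i j * ((y i - y j) * (y i - y j)) := by
      rw [Finset.sum_product]
      exact Finset.sum_congr rfl fun i _ => Finset.sum_congr rfl fun j _ => by
        rw [mul_pow, Real.sq_sqrt (hW0 i j)]; ring
    rw [c1, c2, c3] at key
    rw [bilin x y, bilin x x, bilin y y]
    nlinarith [key]
  -- operator norm bound
  have hLx : ∀ x : Fin n → ℝ, (L *ᵥ x) ⬝ᵥ (L *ᵥ x) ≤ 4*d^2*(x ⬝ᵥ x) := by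
    intro x
    have row : ∀ i, (∑ j, W i j * x j)^2 ≤ D i * ∑ j, W i j * (x j)^2 := by
      intro i
      have cs := Finset.sum_mul_sq_le_sq_mul_sq Finset.univ
        (fun j => Real.sqrt (W i j)) (fun j => Real.sqrt (W i j) * x j)
      have c1 : ∑ j, Real.sqrt (W i j) * (Real.sqrt (W i j) * x j) = ∑ j, W i j * x j :=
        Finset.sum_congr rfl fun j _ => by
          rw [← mul_assoc, Real.mul_self_sqrt (hW0 i j)]
      have c2 : ∑ j, (Real.sqrt (W i j))^2 = D i :=
        Finset.sum_congr rfl fun j _ => Real.sq_sqrt (hW0 i j)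
      have c3 : ∑ j, (Real.sqrt (W i j) * x j)^2 = ∑ j, W i j * (x j)^2 :=
        Finset.sum_congr rfl fun j _ => by rw [mul_pow, Real.sq_sqrt (hW0 i j)]
      rw [c1, c2, c3] at cs
      exact cs
    have hWx : ∑ i, (∑ j, W i j * x j)^2 ≤ d^2 * ∑ i, (x i)^2 := by
      calc ∑ i, (∑ j, W i j * x j)^2
          ≤ ∑ i, D i * ∑ j, W i j * (x j)^2 := Finset.sum_le_sum fun i _ => row i
        _ ≤ ∑ i, d * ∑ j, W i j * (x j)^2 := Finset.sum_le_sum fun i _ =>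
            mul_le_mul_of_nonneg_right (hdmax i)
              (Finset.sum_nonneg fun j _ => mul_nonneg (hW0 i j) (sq_nonneg _))
        _ = d * ∑ j, (∑ i, W i j) * (x j)^2 := by
            rw [← Finset.mul_sum, Finset.sum_comm]
            congr 1
            exact Finset.sum_congr rfl fun j _ => (Finset.sum_mul _ _ _).symm
        _ ≤ d * ∑ j, d * (x j)^2 := by
            apply mul_le_mul_of_nonneg_left _ (le_of_lt hd_pos)
            exact Finset.sum_le_sum fun j _ => by
              rw [hcol j]
              exact mul_le_mul_of_nonneg_right (hdmax j) (sq_nonneg _)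
        _ = d^2 * ∑ i, (x i)^2 := by rw [← Finset.mul_sum]; ring
    have hLapp : ∀ i, (L *ᵥ x) i = D i * x i - ∑ j, W i j * x j := by
      intro i
      rw [hL, Matrix.sub_mulVec]
      show (Matrix.diagonal D *ᵥ x) i - (W *ᵥ x) i = _
      rw [Matrix.mulVec_diagonal]
      congr 1
    have hDx : ∑ i, (D i * x i)^2 ≤ d^2 * ∑ i, (x i)^2 := by
      rw [Finset.mul_sum]
      exact Finset.sum_le_sum fun i _ => by
        rw [mul_pow]
        exact mul_le_mul_of_nonneg_right (by nlinarith [hD0 i, hdmax i]) (sq_nonneg _)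
    calc (L *ᵥ x) ⬝ᵥ (L *ᵥ x) = ∑ i, ((L *ᵥ x) i)^2 := hdot _
      _ = ∑ i, (D i * x i - ∑ j, W i j * x j)^2 :=
          Finset.sum_congr rfl fun i _ => by rw [hLapp i]
      _ ≤ ∑ i, (2*(D i * x i)^2 + 2*(∑ j, W i j * x j)^2) :=
          Finset.sum_le_sum fun i _ => by nlinarith [sq_nonneg (D i * x i + ∑ j, W i j * x j)]
      _ = 2*(∑ i, (D i * x i)^2) + 2*(∑ i, (∑ j, W i j * x j)^2) := by
          rw [Finset.sum_add_distrib, ← Finset.mul_sum, ← Finset.mul_sum]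
      _ ≤ 2*(d^2 * ∑ i, (x i)^2) + 2*(d^2 * ∑ i, (x i)^2) := by nlinarith [hDx, hWx]
      _ = 4*d^2*(x ⬝ᵥ x) := by rw [hdot x]; ring
  -- quadratic form bound
  have hform : ∀ y : Fin n → ℝ, y ⬝ᵥ L *ᵥ y ≤ 2*d*(y ⬝ᵥ y) := by
    intro y
    have h1 := Finset.sum_mul_sq_le_sq_mul_sq Finset.univ y (fun i => (L *ᵥ y) i)
    have e1 : ∑ i, y i * (L *ᵥ y) i = y ⬝ᵥ L *ᵥ y := rfl
    have e2 : ∑ i, (y i)^2 = y ⬝ᵥ y := (hdot y).symm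
    have e3 : ∑ i, ((L *ᵥ y) i)^2 = (L *ᵥ y) ⬝ᵥ (L *ᵥ y) := (hdot _).symm
    rw [e1, e2, e3] at h1
    have h2 := hLx y
    have h3 : (y ⬝ᵥ L *ᵥ y)^2 ≤ (2*d*(y ⬝ᵥ y))^2 := by nlinarith [hself y]
    exact le_of_pow_le_pow_left₀ two_ne_zero
      (mul_nonneg (by linarith) (hself y)) h3
  have hL2 : ∀ x : Fin n → ℝ, (L *ᵥ x) ⬝ᵥ (L *ᵥ x) ≤ 2*d*(x ⬝ᵥ L *ᵥ x) := by
    intro x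
    have hb0 : 0 ≤ (L *ᵥ x) ⬝ᵥ (L *ᵥ x) := hself _
    have hsx : x ⬝ᵥ L *ᵥ (L *ᵥ x) = (L *ᵥ x) ⬝ᵥ (L *ᵥ x) := hLsymm2 x (L *ᵥ x)
    have hcs := hCS x (L *ᵥ x)
    rw [hsx] at hcs
    have he := hform (L *ᵥ x)
    rcases eq_or_lt_of_le hb0 with h|h
    · rw [← h]
      exact mul_nonneg (by linarith) (hpsd x)
    · nlinarith [hcs, he, h, hpsd x]
  -- the matrix A and z
  set A := (1 : Matrix (Fin n) (Fin n) ℝ) + (Q:ℝ)⁻¹ • L with hA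
  have hLsym : L.IsSymm := by
    rw [hL]
    exact (Matrix.isSymm_diagonal _).sub hsymm
  have hAsym : A.IsSymm := by
    rw [Matrix.IsSymm, hA, Matrix.transpose_add, Matrix.transpose_one, Matrix.transpose_smul,
      hLsym]
  have hAH : A.IsHermitian := by
    rw [Matrix.IsHermitian, Matrix.conjTranspose]
    exact Matrix.isHermitian_iff_isSymm.mpr hAsym
  have hApd : A.PosDef := by
    refine Matrix.posDef_iff_dotProduct_mulVec.mpr ⟨hAH, fun x hx => ?_⟩
    have hxx : 0 < x ⬝ᵥ x := by
      rcases eq_or_lt_of_le (hself x) with h|h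
      · exact absurd (dotProduct_self_eq_zero.mp h.symm) hx
      · exact h
    have : x ⬝ᵥ A *ᵥ x = x ⬝ᵥ x + (Q:ℝ)⁻¹ * (x ⬝ᵥ L *ᵥ x) := by
      rw [hA, Matrix.add_mulVec, Matrix.one_mulVec, Matrix.smul_mulVec,
        dotProduct_add, dotProduct_smul, smul_eq_mul]
    have hq0 : (0:ℝ) ≤ (Q:ℝ)⁻¹ := inv_nonneg.mpr (le_of_lt hQR)
    have := this
    simp only [star_trivial]
    rw [this]
    nlinarith [hpsd x, mul_nonneg hq0 (hpsd x)]
  have hdet : IsUnit A.det := isUnit_iff_ne_zero.mpr hApd.det_pos.ne'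
  have hzs : A *ᵥ z = s := by
    rw [hz, Matrix.mulVec_mulVec, Matrix.mul_nonsing_inv A hdet, Matrix.one_mulVec]
  set q := (Q:ℝ)⁻¹ with hqdef
  have hq0 : 0 ≤ q := inv_nonneg.mpr (le_of_lt hQR)
  have hqQ : (Q:ℝ) * q = 1 := mul_inv_cancel₀ hQne
  set v := L *ᵥ z with hv
  set w := L *ᵥ v with hw
  set w2 := L *ᵥ w with hw2
  have hseq : s = z + q • v := by
    rw [← hzs, hA, Matrix.add_mulVec, Matrix.one_mulVec, Matrix.smul_mulVec, ← hv]
  have hu : L *ᵥ s = v + q • w := by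
    rw [hseq, Matrix.mulVec_add, Matrix.mulVec_smul, ← hv, ← hw]
  have hLu : L *ᵥ (v + q • w) = w + q • w2 := by
    rw [Matrix.mulVec_add, Matrix.mulVec_smul, ← hw, ← hw2]
  have dexp : ∀ (a b c e : Fin n → ℝ), (a + q • b) ⬝ᵥ (c + q • e)
      = a ⬝ᵥ c + q*(a ⬝ᵥ e) + q*(b ⬝ᵥ c) + q^2*(b ⬝ᵥ e) := by
    intro a b c e
    rw [add_dotProduct, dotProduct_add, dotProduct_add, smul_dotProduct, smul_dotProduct,
      dotProduct_smul, dotProduct_smul]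
    simp only [smul_eq_mul]
    ring
  have hzw : z ⬝ᵥ w = v ⬝ᵥ v := by
    rw [hw, hLsymm2 z v, ← hv]
  have hvw2 : v ⬝ᵥ w2 = w ⬝ᵥ w := by
    rw [hw2, hLsymm2 v w, ← hw]
  have hS1 : s ⬝ᵥ L *ᵥ s = z ⬝ᵥ v + 2*q*(v ⬝ᵥ v) + q^2*(v ⬝ᵥ w) := by
    rw [hu, hseq, dexp, hzw]
    ring
  have hS2 : (L *ᵥ s) ⬝ᵥ (L *ᵥ s) = v ⬝ᵥ v + 2*q*(v ⬝ᵥ w) + q^2*(w ⬝ᵥ w) := by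
    rw [hu, dexp, dotProduct_comm w v]
    ring
  have hS3 : (L *ᵥ s) ⬝ᵥ (L *ᵥ (L *ᵥ s)) = v ⬝ᵥ w + 2*q*(w ⬝ᵥ w) + q^2*(w ⬝ᵥ w2) := by
    rw [hu, hLu, dexp, hvw2]
    ring
  have hp2 : 0 ≤ v ⬝ᵥ v := hself v
  have hp3 : 0 ≤ v ⬝ᵥ w := by rw [hw]; exact hpsd v
  have hp4 : 0 ≤ w ⬝ᵥ w := hself w
  have hp5 : 0 ≤ w ⬝ᵥ w2 := by rw [hw2]; exact hpsd w
  have hp4le : w ⬝ᵥ w ≤ 2*d*(v ⬝ᵥ w) := by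
    have h := hL2 v
    rw [← hw] at h
    exact h
  have hp5le : w ⬝ᵥ w2 ≤ 2*d*(w ⬝ᵥ w) := by
    have h := hform w
    rw [← hw2] at h
    exact h
  have hdq : 3*(d*q) ≤ 1 := by
    have h := mul_le_mul_of_nonneg_right hQ3d hq0
    rw [hqQ] at h
    linarith [h]
  have key1 : 2*q*(v ⬝ᵥ v) + q^2*(v ⬝ᵥ w)
      ≤ 2*q*((L *ᵥ s) ⬝ᵥ (L *ᵥ s)) - q^2*((L *ᵥ s) ⬝ᵥ (L *ᵥ (L *ᵥ s))) := by
    rw [hS2, hS3]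
    have e1 : q^4*(w ⬝ᵥ w2) ≤ q^4*(2*d*(2*d*(v ⬝ᵥ w))) := by
      have h1 : w ⬝ᵥ w2 ≤ 2*d*(2*d*(v ⬝ᵥ w)) := by nlinarith [hp5le, hp4le, hd_pos]
      exact mul_le_mul_of_nonneg_left h1 (by positivity)
    have e2 : q^4*(2*d*(2*d*(v ⬝ᵥ w))) ≤ 2*q^2*(v ⬝ᵥ w) := by
      have h9 : 9*(d*q)^2 ≤ 1 := by nlinarith [hdq, mul_nonneg (le_of_lt hd_pos) hq0]
      nlinarith [mul_nonneg (mul_nonneg hq0 hq0) hp3, hp3, h9, sq_nonneg (q*q)]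
    nlinarith [e1, e2]
  have haM : s ⬝ᵥ L *ᵥ s ≤ 2*M := by
    rw [bilin]
    have hs4 : ∀ i j, (s i - s j) * (s i - s j) ≤ 4 := by
      intro i j
      rcases hs i with h|h <;> rcases hs j with h'|h' <;> rw [h, h'] <;> norm_num
    have hb : ∑ i, ∑ j, W i j * ((s i - s j)*(s i - s j)) ≤ ∑ i, ∑ j, W i j * 4 :=
      Finset.sum_le_sum fun i _ => Finset.sum_le_sum fun j _ =>
        mul_le_mul_of_nonneg_left (hs4 i j) (hW0 i j)
    have he : ∑ i, ∑ j, W i j * 4 = 4 * M := by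
      calc ∑ i, ∑ j, W i j * 4 = ∑ i, D i * 4 :=
            Finset.sum_congr rfl fun i _ => (Finset.sum_mul _ _ _).symm
        _ = (∑ i, D i) * 4 := (Finset.sum_mul _ _ _).symm
        _ = 4 * M := by rw [hM]; ring
    linarith
  have ha0 : 0 ≤ s ⬝ᵥ L *ᵥ s := hpsd s
  have hba : (L *ᵥ s) ⬝ᵥ (L *ᵥ s) ≤ 2*d*(s ⬝ᵥ L *ᵥ s) := hL2 s
  have hb0' : 0 ≤ (L *ᵥ s) ⬝ᵥ (L *ᵥ s) := hself _
  have hc0 : 0 ≤ (L *ᵥ s) ⬝ᵥ (L *ᵥ (L *ᵥ s)) := hpsd (L *ᵥ s)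
  have hcs2 : ((L *ᵥ s) ⬝ᵥ (L *ᵥ s))^2 ≤ (s ⬝ᵥ L *ᵥ s) * ((L *ᵥ s) ⬝ᵥ (L *ᵥ (L *ᵥ s))) := by
    have h := hCS s (L *ᵥ s)
    rw [hLsymm2 s (L *ᵥ s)] at h
    exact h
  have hRHSpos1 : 0 < 8/M + 2/M^3 := by positivity
  have hRHSpos2 : 0 < 4/M + 5/(2*M^3) := by positivity
  have main : 2*q*(v ⬝ᵥ v) + q^2*(v ⬝ᵥ w) ≤ 8/M + 2/M^3 := by
    rcases eq_or_lt_of_le ha0 with hzero|hpos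
    · have hbz : (L *ᵥ s) ⬝ᵥ (L *ᵥ s) ≤ 0 := by
        rw [← hzero] at hba
        linarith
      have hkey : 2*q*((L *ᵥ s) ⬝ᵥ (L *ᵥ s)) - q^2*((L *ᵥ s) ⬝ᵥ (L *ᵥ (L *ᵥ s))) ≤ 0 := by
        nlinarith [hc0, sq_nonneg q, hq0, hbz, hb0']
      linarith [key1]
    · have hfin := scalar_key M d (Q:ℝ) (s ⬝ᵥ L *ᵥ s) ((L *ᵥ s) ⬝ᵥ (L *ᵥ s))
        hd1 h2d hM2 hQd hpos haM hb0' hba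
      have hca : ((L *ᵥ s) ⬝ᵥ (L *ᵥ s))^2 / (s ⬝ᵥ L *ᵥ s) ≤ (L *ᵥ s) ⬝ᵥ (L *ᵥ (L *ᵥ s)) :=
        (div_le_iff₀ hpos).mpr (by nlinarith [hcs2])
      have h1 : q^2*(((L *ᵥ s) ⬝ᵥ (L *ᵥ s))^2 / (s ⬝ᵥ L *ᵥ s))
          ≤ q^2*((L *ᵥ s) ⬝ᵥ (L *ᵥ (L *ᵥ s))) :=
        mul_le_mul_of_nonneg_left hca (sq_nonneg q)
      have h2 : 2*q*((L *ᵥ s) ⬝ᵥ (L *ᵥ s)) = 2*((L *ᵥ s) ⬝ᵥ (L *ᵥ s))/(Q:ℝ) := by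
        rw [hqdef]; ring
      have h3 : q^2*(((L *ᵥ s) ⬝ᵥ (L *ᵥ s))^2 / (s ⬝ᵥ L *ᵥ s))
          = ((L *ᵥ s) ⬝ᵥ (L *ᵥ s))^2/((Q:ℝ)^2*(s ⬝ᵥ L *ᵥ s)) := by
        rw [hqdef]
        field_simp
      linarith [key1, h1, hfin]
  constructor
  · rw [hS1]
    linarith [main]
  · rw [hS1]
    have hnn : 0 ≤ 2*q*(v ⬝ᵥ v) + q^2*(v ⬝ᵥ w) := by
      nlinarith [hp2, hp3, hq0, sq_nonneg q]
    linarith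
end

section
/- Let W ∈ ℝ^{n×n} be a symmetric matrix of nonnegative integer weights with zero diagonal, let L be its Laplacian, let M = Σ_{i,j} W_{ij}, and assume M ≥ 17. Let Q be a positive integer with Q ≥ (M² − 1) · max_i D_{ii}, and for s ∈ {−1,1}^n write z(s) = (I + (1/Q)L)^{-1} s. Then: (i) for every s ∈ {−1,1}^n, |z(s)^T L z(s) − s^T L s| < 1/2, so the integer nearest to z(s)^T L z(s) equals s^T L s; and (ii) every s* ∈ {−1,1}^n that maximizes s ↦ z(s)^T L z(s) over {−1,1}^n also maximizes s ↦ s^T L s over {−1,1}^n, and the maximum of s ↦ s^T L s over {−1,1}^n equals the integer nearest to the maximum of s ↦ z(s)^T L z(s) over {−1,1}^n. -/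
open Matrix BigOperators


lemma stmt10_arith (M Qr q P1 P2 P3 : ℝ) (hM17 : 17 ≤ M) (hq0 : 0 < q)
    (hqQ : q * Qr = 1)
    (hP1 : 0 ≤ P1) (hP2 : 0 ≤ P2) (hP3 : 0 ≤ P3)
    (b2 : (M ^ 2 - 1) * P2 ≤ 2 * Qr * P1) (b3 : (M ^ 2 - 1) * P3 ≤ 2 * Qr * P2)
    (hsum : P1 + 2 * (q * P2) + q ^ 2 * P3 ≤ 2 * M) :
    0 ≤ 2 * (q * P2) + q ^ 2 * P3 ∧ 2 * (q * P2) + q ^ 2 * P3 < 1 / 2 := by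
  have hA : 0 ≤ q * P2 := mul_nonneg hq0.le hP2
  have hB : 0 ≤ q ^ 2 * P3 := mul_nonneg (sq_nonneg q) hP3
  refine ⟨by linarith, ?_⟩
  set e : ℝ := M ^ 2 - 1 with hedef
  have he : (288:ℝ) ≤ e := by nlinarith
  have hepos : (0:ℝ) < e := by linarith
  have hP1le : P1 ≤ 2 * M := by linarith
  have c2 : e * (q * P2) ≤ 2 * P1 := by
    calc e * (q * P2) = q * (e * P2) := by ring
      _ ≤ q * (2 * Qr * P1) := mul_le_mul_of_nonneg_left b2 hq0.le
      _ = 2 * (q * Qr) * P1 := by ring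
      _ = 2 * P1 := by rw [hqQ]; ring
  have c3 : e * (q * P3) ≤ 2 * P2 := by
    calc e * (q * P3) = q * (e * P3) := by ring
      _ ≤ q * (2 * Qr * P2) := mul_le_mul_of_nonneg_left b3 hq0.le
      _ = 2 * (q * Qr) * P2 := by ring
      _ = 2 * P2 := by rw [hqQ]; ring
  have d3 : e ^ 2 * (q ^ 2 * P3) ≤ 4 * P1 := by
    calc e ^ 2 * (q ^ 2 * P3) = (q * e) * (e * (q * P3)) := by ring
      _ ≤ (q * e) * (2 * P2) := mul_le_mul_of_nonneg_left c3 (by positivity)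
      _ = 2 * (e * (q * P2)) := by ring
      _ ≤ 2 * (2 * P1) := by linarith
      _ = 4 * P1 := by ring
  have hfinal : e ^ 2 * (2 * (q * P2) + q ^ 2 * P3) ≤ 8 * M ^ 3 := by
    have h6 : e * (e * (q * P2)) ≤ e * (2 * P1) := mul_le_mul_of_nonneg_left c2 hepos.le
    have h7 : e * P1 ≤ e * (2 * M) := mul_le_mul_of_nonneg_left hP1le hepos.le
    have he1 : e + 1 = M ^ 2 := by rw [hedef]; ring
    calc e ^ 2 * (2 * (q * P2) + q ^ 2 * P3)
        = 2 * (e * (e * (q * P2))) + e ^ 2 * (q ^ 2 * P3) := by ring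
      _ ≤ 2 * (e * (2 * P1)) + 4 * P1 := by linarith
      _ = 4 * (e * P1) + 4 * P1 := by ring
      _ ≤ 4 * (e * (2 * M)) + 4 * (2 * M) := by linarith
      _ = 8 * M * (e + 1) := by ring
      _ = 8 * M ^ 3 := by rw [he1]; ring
  have h16 : 16 * M ^ 3 < e ^ 2 := by
    have hM0 : (0:ℝ) < M := by linarith
    have ha : 0 ≤ M ^ 3 * (M - 17) := mul_nonneg (by positivity) (by linarith)
    have hb2 : 0 ≤ M ^ 2 * (M - 2) := mul_nonneg (by positivity) (by linarith)
    nlinarith [ha, hb2]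
  have hepos2 : (0:ℝ) < e ^ 2 := by positivity
  nlinarith [hfinal, h16, hepos2, hA, hB]

set_option maxHeartbeats 2000000 in
theorem stmt10 (n : ℕ) (W : Matrix (Fin n) (Fin n) ℝ)
    (hsymm : W.IsSymm) (hint : ∀ i j, ∃ m : ℕ, W i j = m) (hdiag : ∀ i, W i i = 0)
    (L : Matrix (Fin n) (Fin n) ℝ)
    (hL : L = Matrix.diagonal (fun i => ∑ j, W i j) - W)
    (M : ℝ) (hM : M = ∑ i, ∑ j, W i j) (hM17 : 17 ≤ M)
    (Q : ℕ) (hQpos : 0 < Q)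
    (hQ : ∀ i, (M ^ 2 - 1) * (∑ j, W i j) ≤ (Q : ℝ))
    (z : (Fin n → ℝ) → Fin n → ℝ)
    (hz : ∀ s, z s = ((1 + (Q : ℝ)⁻¹ • L)⁻¹).mulVec s) :
    (∀ s : Fin n → ℝ, (∀ i, s i = 1 ∨ s i = -1) →
      |z s ⬝ᵥ L.mulVec (z s) - s ⬝ᵥ L.mulVec s| < 1 / 2 ∧
        (round (z s ⬝ᵥ L.mulVec (z s)) : ℝ) = s ⬝ᵥ L.mulVec s) ∧
    (∀ s' : Fin n → ℝ, (∀ i, s' i = 1 ∨ s' i = -1) →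
      (∀ s : Fin n → ℝ, (∀ i, s i = 1 ∨ s i = -1) →
        z s ⬝ᵥ L.mulVec (z s) ≤ z s' ⬝ᵥ L.mulVec (z s')) →
      (∀ s : Fin n → ℝ, (∀ i, s i = 1 ∨ s i = -1) →
        s ⬝ᵥ L.mulVec s ≤ s' ⬝ᵥ L.mulVec s') ∧
        s' ⬝ᵥ L.mulVec s' = (round (z s' ⬝ᵥ L.mulVec (z s')) : ℝ)) := by
  have hWs : ∀ i j, W j i = W i j := fun i j => hsymm.apply i j
  have hW0 : ∀ i j, 0 ≤ W i j := fun i j => by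
    obtain ⟨m, hm⟩ := hint i j; rw [hm]; positivity
  -- quadratic form identity
  have sqform : ∀ x : Fin n → ℝ,
      2 * (x ⬝ᵥ L *ᵥ x) = ∑ i, ∑ j, W i j * (x i - x j) ^ 2 := by
    intro x
    have expand : x ⬝ᵥ L *ᵥ x
        = (∑ i, (∑ j, W i j) * x i ^ 2) - ∑ i, ∑ j, x i * W i j * x j := by
      rw [hL]
      simp only [dotProduct, mulVec, Matrix.sub_apply, diagonal_apply]
      rw [← Finset.sum_sub_distrib]
      refine Finset.sum_congr rfl fun i _ => ?_
      rw [Finset.mul_sum]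
      have h : ∀ j, x i * (((if i = j then ∑ k, W i k else 0) - W i j) * x j)
          = (if i = j then (∑ k, W i k) * (x j * x j) else 0) - x i * W i j * x j := by
        intro j; split <;> rename_i hij
        · subst hij; ring
        · ring
      simp_rw [h]
      rw [Finset.sum_sub_distrib, Finset.sum_ite_eq]
      simp only [Finset.mem_univ, if_true]
      ring
    have h1 : ∑ i, ∑ j, W i j * x j ^ 2 = ∑ i, (∑ j, W i j) * x i ^ 2 := by
      rw [Finset.sum_comm]
      refine Finset.sum_congr rfl fun j _ => ?_
      rw [Finset.sum_mul]
      exact Finset.sum_congr rfl fun i _ => by rw [hWs i j]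
    have h2 : ∀ i j, W i j * (x i - x j) ^ 2
        = W i j * x i ^ 2 + W i j * x j ^ 2 - 2 * (x i * W i j * x j) := by
      intro i j; ring
    simp_rw [h2, Finset.sum_sub_distrib, Finset.sum_add_distrib, ← Finset.sum_mul]
    rw [h1, expand]
    ring_nf
    have h3 : ∀ i j, 2 * x i * W i j * x j = x i * W i j * x j * 2 := by intros; ring
    simp_rw [← Finset.sum_mul]
  -- nonnegativity of the quadratic form
  have hPSDquad : ∀ x : Fin n → ℝ, 0 ≤ x ⬝ᵥ L *ᵥ x := by
    intro x
    have h : 0 ≤ ∑ i, ∑ j, W i j * (x i - x j) ^ 2 := by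
      apply Finset.sum_nonneg; intro i _
      apply Finset.sum_nonneg; intro j _
      exact mul_nonneg (hW0 i j) (sq_nonneg _)
    nlinarith [sqform x]
  -- key spectral-type bound
  have hbound : ∀ x : Fin n → ℝ,
      (M ^ 2 - 1) * (x ⬝ᵥ L *ᵥ x) ≤ 2 * (Q : ℝ) * (x ⬝ᵥ x) := by
    intro x
    have hM2 : (0:ℝ) ≤ M ^ 2 - 1 := by nlinarith
    have h1 : ∑ i, ∑ j, W i j * x j ^ 2 = ∑ i, (∑ j, W i j) * x i ^ 2 := by
      rw [Finset.sum_comm]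
      refine Finset.sum_congr rfl fun j _ => ?_
      rw [Finset.sum_mul]
      exact Finset.sum_congr rfl fun i _ => by rw [hWs i j]
    have hstep : 2 * (x ⬝ᵥ L *ᵥ x) ≤ 4 * ∑ i, (∑ j, W i j) * x i ^ 2 := by
      rw [sqform x]
      calc ∑ i, ∑ j, W i j * (x i - x j) ^ 2
          ≤ ∑ i, ∑ j, (W i j * (2 * x i ^ 2) + W i j * (2 * x j ^ 2)) := by
            apply Finset.sum_le_sum; intro i _
            apply Finset.sum_le_sum; intro j _
            have := hW0 i j
            nlinarith [sq_nonneg (x i + x j)]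
        _ = ∑ i, (2 * ((∑ j, W i j) * x i ^ 2) + 2 * ∑ j, W i j * x j ^ 2) := by
            refine Finset.sum_congr rfl fun i _ => ?_
            rw [Finset.sum_add_distrib]
            congr 1
            · rw [← Finset.sum_mul]; ring
            · rw [Finset.mul_sum]
              exact Finset.sum_congr rfl fun j _ => by ring
        _ = 2 * (∑ i, (∑ j, W i j) * x i ^ 2) + 2 * ∑ i, ∑ j, W i j * x j ^ 2 := by
            rw [Finset.sum_add_distrib, ← Finset.mul_sum, ← Finset.mul_sum]
        _ = 4 * ∑ i, (∑ j, W i j) * x i ^ 2 := by rw [h1]; ring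
    have hstep2 : (M ^ 2 - 1) * ∑ i, (∑ j, W i j) * x i ^ 2
        ≤ (Q : ℝ) * ∑ i, x i ^ 2 := by
      rw [Finset.mul_sum, Finset.mul_sum]
      apply Finset.sum_le_sum; intro i _
      have hq := hQ i
      have hx := sq_nonneg (x i)
      calc (M ^ 2 - 1) * ((∑ j, W i j) * x i ^ 2)
          = ((M ^ 2 - 1) * (∑ j, W i j)) * x i ^ 2 := by ring
        _ ≤ (Q : ℝ) * x i ^ 2 := mul_le_mul_of_nonneg_right hq hx
    have hdd : x ⬝ᵥ x = ∑ i, x i ^ 2 := by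
      simp [dotProduct, sq]
    rw [hdd]
    nlinarith [hstep, hstep2]
  -- symmetry of L
  have hLT : Lᵀ = L := by
    rw [hL, transpose_sub, Matrix.diagonal_transpose, hsymm.eq]
  have hLH : L.IsHermitian := by
    rw [Matrix.IsHermitian, conjTranspose_eq_transpose_of_trivial, hLT]
  have hPSD : L.PosSemidef := Matrix.PosSemidef.of_dotProduct_mulVec_nonneg hLH fun x => by simpa using hPSDquad x
  have hswap : ∀ (A : Matrix (Fin n) (Fin n) ℝ), Aᵀ = A →
      ∀ u v : Fin n → ℝ, u ⬝ᵥ A *ᵥ v = (A *ᵥ u) ⬝ᵥ v := by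
    intro A hA u v
    rw [dotProduct_mulVec, ← mulVec_transpose, hA]
  -- invertibility
  have hq0 : (0:ℝ) < (Q : ℝ)⁻¹ := by positivity
  have hsmulPSD : ((Q : ℝ)⁻¹ • L).PosSemidef := by
    apply Matrix.PosSemidef.of_dotProduct_mulVec_nonneg
    · rw [Matrix.IsHermitian, conjTranspose_smul]
      rw [hLH.eq]
      simp
    · intro x
      rw [smul_mulVec, dotProduct_smul]
      have := hPSDquad x
      simp only [star_trivial, smul_eq_mul]
      exact mul_nonneg hq0.le this
  have hAdef : (1 + (Q : ℝ)⁻¹ • L).PosDef := Matrix.PosDef.one.add_posSemidef hsmulPSD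
  have hdet : IsUnit (1 + (Q : ℝ)⁻¹ • L).det := isUnit_iff_ne_zero.mpr hAdef.det_pos.ne'
  have hsz : ∀ s : Fin n → ℝ, s = z s + (Q : ℝ)⁻¹ • (L *ᵥ z s) := by
    intro s
    have h1 : (1 + (Q : ℝ)⁻¹ • L) *ᵥ z s = s := by
      rw [hz s, mulVec_mulVec, Matrix.mul_nonsing_inv _ hdet, one_mulVec]
    calc s = (1 + (Q : ℝ)⁻¹ • L) *ᵥ z s := h1.symm
      _ = z s + (Q : ℝ)⁻¹ • (L *ᵥ z s) := by
          rw [add_mulVec, one_mulVec, smul_mulVec]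
  -- sqrt facts
  obtain ⟨Sq, hSqsa, -, hSS⟩ := open scoped MatrixOrder in
    CFC.exists_sqrt_of_isSelfAdjoint_of_quasispectrumRestricts hLH
      (QuasispectrumRestricts.nnreal_of_nonneg hPSD.nonneg)
  have hST : Sqᵀ = Sq := by
    have h := hSqsa
    rwa [IsSelfAdjoint, star_eq_conjTranspose, conjTranspose_eq_transpose_of_trivial] at h
  have hqQ : (Q : ℝ)⁻¹ * (Q : ℝ) = 1 := inv_mul_cancel₀ (by positivity)
  have hP2bound : ∀ v : Fin n → ℝ,
      (M ^ 2 - 1) * ((L *ᵥ v) ⬝ᵥ (L *ᵥ v)) ≤ 2 * (Q : ℝ) * (v ⬝ᵥ L *ᵥ v) := by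
    intro v
    set S := Sq with hSdef
    have h1 : (L *ᵥ v) ⬝ᵥ (L *ᵥ v) = (S *ᵥ v) ⬝ᵥ L *ᵥ (S *ᵥ v) := by
      have hy : L *ᵥ v = S *ᵥ (S *ᵥ v) := by rw [mulVec_mulVec, hSS]
      rw [hy, ← hswap S hST (S *ᵥ v) (S *ᵥ (S *ᵥ v)),
        mulVec_mulVec (S *ᵥ v) S S, hSS]
    have h2 : (S *ᵥ v) ⬝ᵥ (S *ᵥ v) = v ⬝ᵥ L *ᵥ v := by
      rw [← hswap S hST v (S *ᵥ v), mulVec_mulVec, hSS]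
    rw [h1, ← h2]
    exact hbound (S *ᵥ v)
  have he : (288:ℝ) ≤ M ^ 2 - 1 := by nlinarith
  have hepos : (0:ℝ) < M ^ 2 - 1 := by linarith
  -- the key estimate
  have hdiff : ∀ s : Fin n → ℝ, (∀ i, s i = 1 ∨ s i = -1) →
      0 ≤ s ⬝ᵥ L *ᵥ s - z s ⬝ᵥ L *ᵥ z s ∧
        s ⬝ᵥ L *ᵥ s - z s ⬝ᵥ L *ᵥ z s < 1 / 2 := by
    intro s hs
    have hswap1 : z s ⬝ᵥ L *ᵥ (L *ᵥ z s) = (L *ᵥ z s) ⬝ᵥ (L *ᵥ z s) :=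
      hswap L hLT (z s) (L *ᵥ z s)
    have hid : s ⬝ᵥ L *ᵥ s = z s ⬝ᵥ (L *ᵥ z s)
        + 2 * ((Q : ℝ)⁻¹ * ((L *ᵥ z s) ⬝ᵥ (L *ᵥ z s)))
        + ((Q : ℝ)⁻¹) ^ 2 * ((L *ᵥ z s) ⬝ᵥ L *ᵥ (L *ᵥ z s)) := by
      conv_lhs => rw [hsz s]
      rw [mulVec_add, mulVec_smul]
      rw [dotProduct_add, add_dotProduct, add_dotProduct,
        dotProduct_smul, smul_dotProduct, smul_dotProduct, dotProduct_smul]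
      simp only [smul_eq_mul]
      rw [hswap1]
      ring
    have hP1 : 0 ≤ z s ⬝ᵥ (L *ᵥ z s) := hPSDquad (z s)
    have hP2 : 0 ≤ (L *ᵥ z s) ⬝ᵥ (L *ᵥ z s) :=
      Finset.sum_nonneg fun i _ => mul_self_nonneg _
    have hP3 : 0 ≤ (L *ᵥ z s) ⬝ᵥ L *ᵥ (L *ᵥ z s) := hPSDquad (L *ᵥ z s)
    have b2 := hP2bound (z s)
    have b3 := hbound (L *ᵥ z s)
    have hsLs : s ⬝ᵥ L *ᵥ s ≤ 2 * M := by
      have h4 : ∀ i j, W i j * (s i - s j) ^ 2 ≤ 4 * W i j := by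
        intro i j
        rcases hs i with h | h <;> rcases hs j with h' | h' <;> rw [h, h'] <;>
          nlinarith [hW0 i j]
      have hb : ∑ i, ∑ j, W i j * (s i - s j) ^ 2 ≤ ∑ i, ∑ j, (4:ℝ) * W i j :=
        Finset.sum_le_sum fun i _ => Finset.sum_le_sum fun j _ => h4 i j
      have hsum4 : ∑ i, ∑ j, (4:ℝ) * W i j = 4 * M := by
        rw [hM, Finset.mul_sum]
        exact Finset.sum_congr rfl fun i _ => by rw [Finset.mul_sum]
      have hq1 := sqform s
      linarith
    have hq0' : (0:ℝ) < (Q : ℝ)⁻¹ := hq0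
    have harith := stmt10_arith M (Q : ℝ) ((Q : ℝ)⁻¹)
      (z s ⬝ᵥ (L *ᵥ z s)) ((L *ᵥ z s) ⬝ᵥ (L *ᵥ z s))
      ((L *ᵥ z s) ⬝ᵥ L *ᵥ (L *ᵥ z s)) hM17 hq0' hqQ hP1 hP2 hP3 b2 b3
      (by linarith [hid, hsLs])
    constructor
    · linarith [harith.1, hid]
    · linarith [harith.2, hid]
  -- integrality
  have hInt : ∀ s : Fin n → ℝ, (∀ i, s i = 1 ∨ s i = -1) →
      ∃ k : ℤ, s ⬝ᵥ L *ᵥ s = (k : ℝ) := by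
    intro s hs
    choose m hm using hint
    have hL' : ∀ i j, ∃ k : ℤ, L i j = (k : ℝ) := by
      intro i j
      refine ⟨(if i = j then ∑ k, (m i k : ℤ) else 0) - m i j, ?_⟩
      rw [hL, Matrix.sub_apply, diagonal_apply]
      push_cast
      split_ifs with h
      · rw [hm i j]
        congr 1
        exact Finset.sum_congr rfl fun k _ => hm i k
      · rw [hm i j]
    have hEps : ∀ i, ∃ e : ℤ, s i = (e : ℝ) := fun i =>
      (hs i).elim (fun h => ⟨1, by simp [h]⟩) (fun h => ⟨-1, by simp [h]⟩)
    choose ε hε using hEps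
    choose lk hlk using hL'
    have hexp : s ⬝ᵥ L *ᵥ s = ∑ i, ∑ j, s i * (L i j * s j) := by
      simp [dotProduct, mulVec, Finset.mul_sum]
    refine ⟨∑ i, ∑ j, ε i * (lk i j * ε j), ?_⟩
    rw [hexp]
    push_cast
    exact Finset.sum_congr rfl fun i _ => Finset.sum_congr rfl fun j _ => by
      rw [hε i, hlk i j, hε j]
  -- rounding
  have hround : ∀ (x : ℝ) (k : ℤ), |x - k| < 1 / 2 → round x = k := by
    intro x k h
    rw [round_eq, Int.floor_eq_iff]
    obtain ⟨ha, hb⟩ := abs_lt.mp h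
    constructor <;> push_cast <;> linarith
  have main1 : ∀ s : Fin n → ℝ, (∀ i, s i = 1 ∨ s i = -1) →
      |z s ⬝ᵥ L.mulVec (z s) - s ⬝ᵥ L.mulVec s| < 1 / 2 ∧
        (round (z s ⬝ᵥ L.mulVec (z s)) : ℝ) = s ⬝ᵥ L.mulVec s := by
    intro s hs
    obtain ⟨h0, h1⟩ := hdiff s hs
    have habs : |z s ⬝ᵥ L.mulVec (z s) - s ⬝ᵥ L.mulVec s| < 1 / 2 := by
      rw [abs_sub_comm, abs_of_nonneg h0]; exact h1
    refine ⟨habs, ?_⟩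
    obtain ⟨k, hk⟩ := hInt s hs
    have hr : round (z s ⬝ᵥ L.mulVec (z s)) = k := by
      apply hround
      rw [← hk]
      exact habs
    rw [hr, hk]
  refine ⟨main1, ?_⟩
  intro s' hs' hmax
  constructor
  · intro s hs
    obtain ⟨k, hk⟩ := hInt s hs
    obtain ⟨k', hk'⟩ := hInt s' hs'
    by_contra hcon
    push_neg at hcon
    have hkk : k' < k := by
      rw [hk, hk'] at hcon
      exact_mod_cast hcon
    have hstep : (k' : ℝ) + 1 ≤ (k : ℝ) := by
      have := Int.add_one_le_iff.mpr hkk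
      exact_mod_cast this
    have habs := (main1 s hs).1
    have habs' := (main1 s' hs').1
    have hmx := hmax s hs
    rw [hk] at habs
    rw [hk'] at habs'
    obtain ⟨a1, a2⟩ := abs_lt.mp habs
    obtain ⟨b1, b2⟩ := abs_lt.mp habs'
    linarith
  · exact ((main1 s' hs').2).symm
end
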